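/- Let G be a finite noncyclic group and C₀ a cyclic subgroup of G. Then G is a flower group with pistil C₀ if and only if for every g ∈ G \ C₀ there exists a unique μ-subgroup C of G with g ∈ C, and this C contains C₀. -/

import Mathlib

/-- A cyclic subgroup `C` of `G` is a μ-subgroup if it is not contained in any cyclic
subgroup of `G` other than `C` itself. -/
def IsMuSubgroup {G : Type*} [Group G] (C : Subgroup G) : Prop :=
  IsCyclic ↥C ∧ ∀ K : Subgroup G, IsCyclic ↥K → C ≤ K → C = K

/-- A noncyclic group `G` is a flower group with pistil `C0` if any two distinct
μ-subgroups of `G` intersect exactly in `C0`. -/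
def IsFlowerGroup {G : Type*} [Group G] (C0 : Subgroup G) : Prop :=
  ¬ IsCyclic G ∧
    ∀ C C' : Subgroup G, IsMuSubgroup C → IsMuSubgroup C' → C ≠ C' → C ⊓ C' = C0

/-- Every element of a finite group lies in some μ-subgroup. -/
lemma exists_mu_subgroup_mem {G : Type*} [Group G] [Finite G] (g : G) :
    ∃ C : Subgroup G, IsMuSubgroup C ∧ g ∈ C := by
  have hcyc : IsCyclic ↥(Subgroup.zpowers g) := by
    refine ⟨⟨⟨g, Subgroup.mem_zpowers g⟩, ?_⟩⟩
    rintro ⟨x, hx⟩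
    obtain ⟨n, rfl⟩ := Subgroup.mem_zpowers_iff.mp hx
    exact ⟨n, by ext; simp⟩
  obtain ⟨K, hK, hmax⟩ := Set.Finite.exists_maximalFor id
    {K : Subgroup G | IsCyclic ↥K ∧ g ∈ K} (Set.toFinite _)
    ⟨Subgroup.zpowers g, ⟨hcyc, Subgroup.mem_zpowers g⟩⟩
  exact ⟨K, ⟨hK.1, fun L hL hKL => le_antisymm hKL (hmax ⟨hL, hKL hK.2⟩ hKL)⟩, hK.2⟩

/-- G is a flower group with pistil C₀ iff every g ∉ C₀ lies in a unique
μ-subgroup C of G, and this C contains C₀. -/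
theorem stmt6 {G : Type*} [Group G] [Finite G] (C0 : Subgroup G)
    (hnc : ¬ IsCyclic G) (hc0 : IsCyclic ↥C0) :
    IsFlowerGroup C0 ↔
      ∀ g : G, g ∉ C0 →
        (∃! C : Subgroup G, IsMuSubgroup C ∧ g ∈ C) ∧
        (∀ C : Subgroup G, IsMuSubgroup C → g ∈ C → C0 ≤ C) := by
  constructor
  · intro hF g hg
    obtain ⟨C, hC, hgC⟩ := exists_mu_subgroup_mem g
    have key : ∀ D : Subgroup G, IsMuSubgroup D → C0 ≤ D := by
      intro D hD
      obtain ⟨D', hD', hne⟩ : ∃ D' : Subgroup G, IsMuSubgroup D' ∧ D' ≠ D := by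
        by_contra hcon
        push_neg at hcon
        apply hF.1
        have hall : ∀ x : G, x ∈ D := fun x => by
          obtain ⟨E, hE, hx⟩ := exists_mu_subgroup_mem x
          rw [← hcon E hE]; exact hx
        have hDtop : D = ⊤ := by ext x; simpa using hall x
        have : IsCyclic ↥(⊤ : Subgroup G) := hDtop ▸ hD.1
        exact isCyclic_of_surjective Subgroup.topEquiv.toMonoidHom
          Subgroup.topEquiv.surjective
      have := hF.2 D D' hD hD' (Ne.symm hne)
      rw [← this]
      exact inf_le_left
    refine ⟨⟨C, ⟨hC, hgC⟩, ?_⟩, fun D hD _ => key D hD⟩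
    rintro C' ⟨hC', hgC'⟩
    by_contra hne
    have := hF.2 C' C hC' hC hne
    exact hg (this ▸ Subgroup.mem_inf.mpr ⟨hgC', hgC⟩)
  · intro h
    refine ⟨hnc, ?_⟩
    intro C C' hC hC' hne
    have hC0le : ∀ D : Subgroup G, IsMuSubgroup D → C0 ≤ D := by
      intro D hD
      by_cases hsub : D ≤ C0
      · exact le_of_eq (hD.2 C0 hc0 hsub).symm
      · obtain ⟨x, hxD, hxC0⟩ := SetLike.not_le_iff_exists.mp hsub
        exact (h x hxC0).2 D hD hxD
    apply le_antisymm
    · intro x hx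
      by_contra hxC0
      obtain ⟨hxC, hxC'⟩ := Subgroup.mem_inf.mp hx
      exact hne ((h x hxC0).1.unique ⟨hC, hxC⟩ ⟨hC', hxC'⟩)
    · exact le_inf (hC0le C hC) (hC0le C' hC')
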